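/- Let v, v' ∈ ℝ² with det(v, v') = ε where ε ∈ {−1, 1}, let p > 0, and define the 2×2 matrix M := [[p⁻¹v₂, ε v'₂],[−p⁻¹v₁, −ε v'₁]]. Then: (i) det M = p⁻¹; (ii) Mᵀ v' = (−ε p⁻¹, 0) and Mᵀ v = (0, 1). Moreover, for a ∈ ℝ let g(ρ,z) := M · diag(μ_a⁺(ρ,z), μ_a⁻(ρ,z)) · Mᵀ; then det g = p⁻² ρ², g(0,z)·v = 0 for all z < a, and g(0,z)·v' = 0 for all z > a. -/
import Mathlib


open Matrix

/-- Model map on an interior region: for consecutive rod vectors v, v' with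
det(v, v') = ε = ±1, p > 0, and M = [[p⁻¹v₂, εv'₂],[−p⁻¹v₁, −εv'₁]], one has
det M = p⁻¹, Mᵀv' = (−εp⁻¹, 0), Mᵀv = (0,1); and with
g = M·diag(μ_a⁺, μ_a⁻)·Mᵀ, det g = p⁻²ρ², g(0,z)v = 0 for z < a and
g(0,z)v' = 0 for z > a. -/
theorem stmt_7 (v v' : Fin 2 → ℝ) (ε : ℝ) (hε : ε = 1 ∨ ε = -1)
    (hdet : v 0 * v' 1 - v 1 * v' 0 = ε) (p : ℝ) (hp : 0 < p) (a : ℝ)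
    (M : Matrix (Fin 2) (Fin 2) ℝ)
    (hM : M = !![p⁻¹ * v 1, ε * v' 1; -(p⁻¹ * v 0), -(ε * v' 0)])
    (g : ℝ → ℝ → Matrix (Fin 2) (Fin 2) ℝ)
    (hg : ∀ ρ z, g ρ z =
      M * Matrix.diagonal ![Real.sqrt (ρ ^ 2 + (z - a) ^ 2) - (z - a),
                            Real.sqrt (ρ ^ 2 + (z - a) ^ 2) + (z - a)] * Mᵀ) :
    M.det = p⁻¹ ∧
    Mᵀ.mulVec v' = ![-(ε * p⁻¹), 0] ∧
    Mᵀ.mulVec v = ![0, 1] ∧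
    (∀ ρ z : ℝ, (g ρ z).det = (p ^ 2)⁻¹ * ρ ^ 2) ∧
    (∀ z : ℝ, z < a → (g 0 z).mulVec v = 0) ∧
    (∀ z : ℝ, a < z → (g 0 z).mulVec v' = 0) := by
  have hε2 : ε * ε = 1 := by rcases hε with h | h <;> subst h <;> ring
  have hMdet : M.det = p⁻¹ := by
    subst hM
    simp [Matrix.det_fin_two_of]
    linear_combination p⁻¹ * ε * hdet + p⁻¹ * hε2
  have hMv' : Mᵀ.mulVec v' = ![-(ε * p⁻¹), 0] := by
    subst hM
    funext i
    fin_cases i <;>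
      simp [Matrix.mulVec, dotProduct, Fin.sum_univ_two] <;>
      first
        | linear_combination (-p⁻¹) * hdet
        | ring
  have hMv : Mᵀ.mulVec v = ![0, 1] := by
    subst hM
    funext i
    fin_cases i <;>
      simp [Matrix.mulVec, dotProduct, Fin.sum_univ_two] <;>
      first
        | linear_combination ε * hdet + hε2
        | ring
  refine ⟨hMdet, hMv', hMv, ?_, ?_, ?_⟩
  · intro ρ z
    have hs : Real.sqrt (ρ ^ 2 + (z - a) ^ 2) ^ 2 = ρ ^ 2 + (z - a) ^ 2 :=
      Real.sq_sqrt (by positivity)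
    rw [hg, Matrix.det_mul, Matrix.det_mul, Matrix.det_transpose, hMdet,
      Matrix.det_diagonal]
    simp [Fin.prod_univ_two]
    field_simp
    nlinarith [hs]
  · intro z hz
    have hs : Real.sqrt ((0:ℝ) ^ 2 + (z - a) ^ 2) = a - z := by
      rw [show (0:ℝ) ^ 2 + (z - a) ^ 2 = (a - z) ^ 2 by ring]
      exact Real.sqrt_sq (by linarith)
    rw [hg, hs, Matrix.mul_assoc, ← Matrix.mulVec_mulVec, ← Matrix.mulVec_mulVec, hMv]
    have : (Matrix.diagonal ![(a - z) - (z - a),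
        (a - z) + (z - a)]).mulVec ![0, 1] = 0 := by
      funext i
      fin_cases i <;>
        simp [Matrix.mulVec, dotProduct, Fin.sum_univ_two,
          Matrix.diagonal] <;> ring
    rw [this, Matrix.mulVec_zero]
  · intro z hz
    have hs : Real.sqrt ((0:ℝ) ^ 2 + (z - a) ^ 2) = z - a := by
      rw [show (0:ℝ) ^ 2 + (z - a) ^ 2 = (z - a) ^ 2 by ring]
      exact Real.sqrt_sq (by linarith)
    rw [hg, hs, Matrix.mul_assoc, ← Matrix.mulVec_mulVec, ← Matrix.mulVec_mulVec, hMv']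
    have : (Matrix.diagonal ![(z - a) - (z - a),
        (z - a) + (z - a)]).mulVec ![-(ε * p⁻¹), 0] = 0 := by
      funext i
      fin_cases i <;>
        simp [Matrix.mulVec, dotProduct, Fin.sum_univ_two,
          Matrix.diagonal] <;> ring
    rw [this, Matrix.mulVec_zero]
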